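/- Fluctuation lemma: suppose J < K < ∞, Y is a carrier for η with M_n = Y_n + S_n - J/2, and there exist n < N with |S̃_N - S̃_n| > K - J and |S̃_m - S̃_n| ≤ K - J for all m ∈ {n,...,N-1}. Then (a) M_N ≠ M_{N-1}; (b) if S̃_N - S̃_n > K - J then M_N = S̃_N; (c) if S̃_N - S̃_n < -(K-J) then M_N = S̃_N + K - J. -/

import Mathlib

/-- First component of the BBS(J,K) local update map. -/
def F1 (J K a b : ℤ) : ℤ := a + min b (J - a) - min a (K - b)

/-- Second component of the BBS(J,K) local update map. -/
def F2 (J K a b : ℤ) : ℤ := b - min b (J - a) + min a (K - b)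

theorem fluctuation_lemma (J K : ℤ) (hJ : 0 < J) (hJK : J < K)
    (η S M2 : ℤ → ℤ)
    (hη : ∀ n, 0 ≤ η n ∧ η n ≤ J)
    (hS0 : S 0 = 0)
    (hSinc : ∀ n, S n - S (n - 1) = J - 2 * η n)
    (hrec : ∀ n, M2 n =
      min (max (M2 (n - 1)) (S (n - 1) + S n)) (S (n - 1) + S n + 2 * (K - J)))
    (hbound : ∀ n, S (n - 1) + S n ≤ M2 n ∧ M2 n ≤ S (n - 1) + S n + 2 * (K - J))
    (n N : ℤ) (hnN : n < N)
    (hbig : |(S (N - 1) + S N) - (S (n - 1) + S n)| > 2 * (K - J))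
    (hsmall : ∀ m, n ≤ m → m ≤ N - 1 →
      |(S (m - 1) + S m) - (S (n - 1) + S n)| ≤ 2 * (K - J)) :
    M2 N ≠ M2 (N - 1) ∧
    ((S (N - 1) + S N) - (S (n - 1) + S n) > 2 * (K - J) → M2 N = S (N - 1) + S N) ∧
    ((S (N - 1) + S N) - (S (n - 1) + S n) < -(2 * (K - J)) →
      M2 N = S (N - 1) + S N + 2 * (K - J)) := by
  have hup : ∀ m, n ≤ m → m ≤ N - 1 → M2 m ≤ S (n - 1) + S n + 2 * (K - J) := by
    intro m hm
    refine Int.le_induction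
      (motive := fun m _ => m ≤ N - 1 → M2 m ≤ S (n - 1) + S n + 2 * (K - J)) ?_ ?_ m hm
    · intro _; exact (hbound n).2
    · intro m hm ih hmN
      have hT := abs_le.mp (hsmall (m + 1) (by omega) hmN)
      have hr := hrec (m + 1)
      have hih := ih (by omega)
      have h1 : m + 1 - 1 = m := by ring
      rw [h1] at hr hT
      rw [hr]
      refine le_trans (min_le_left _ _) ?_
      rcases le_total (M2 m) (S m + S (m + 1)) with h2 | h2
      · rw [max_eq_right h2]; omega
      · rw [max_eq_left h2]; omega
  have hlo : ∀ m, n ≤ m → m ≤ N - 1 → S (n - 1) + S n ≤ M2 m := by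
    intro m hm
    refine Int.le_induction
      (motive := fun m _ => m ≤ N - 1 → S (n - 1) + S n ≤ M2 m) ?_ ?_ m hm
    · intro _; exact (hbound n).1
    · intro m hm ih hmN
      have hT := abs_le.mp (hsmall (m + 1) (by omega) hmN)
      have hr := hrec (m + 1)
      have hih := ih (by omega)
      have h1 : m + 1 - 1 = m := by ring
      rw [h1] at hr hT
      rw [hr]
      exact le_min (le_trans hih (le_max_left _ _)) (by omega)
  have hu := hup (N - 1) (by omega) (by omega)
  have hl := hlo (N - 1) (by omega) (by omega)
  have hr := hrec N
  have hbig' := lt_abs.mp hbig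
  have hkey : (M2 N = S (N - 1) + S N ∧ M2 (N - 1) < M2 N) ∨
      (M2 N = S (N - 1) + S N + 2 * (K - J) ∧ M2 N < M2 (N - 1)) := by
    rcases hbig' with h | h
    · left
      have h2 : M2 (N - 1) ≤ S (N - 1) + S N := by omega
      rw [max_eq_right h2, min_eq_left (by omega)] at hr
      constructor <;> omega
    · right
      have h2 : S (N - 1) + S N ≤ M2 (N - 1) := by omega
      rw [max_eq_left h2, min_eq_right (by omega)] at hr
      constructor <;> omega
  refine ⟨?_, ?_, ?_⟩
  · rcases hkey with ⟨_, h⟩ | ⟨_, h⟩ <;> omega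
  · intro h
    rcases hkey with ⟨h1, _⟩ | ⟨h1, h2⟩
    · exact h1
    · exfalso; rcases hbig' with h3 | h3 <;> omega
  · intro h
    rcases hkey with ⟨h1, h2⟩ | ⟨h1, _⟩
    · exfalso; rcases hbig' with h3 | h3 <;> omega
    · exact h1
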